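/- For every real parameter a and every differentiable function f : ℝ → ℝ, the vortex-plug vector field V_{a,f} is divergence-free: at every point p ∈ ℝ³, V_{a,f} is differentiable and the trace of its Fréchet derivative at p equals 0. -/

import Mathlib

/-- `H_a(x,y,z) = (x² + y²)(x² + y² + z² + a)`. -/
noncomputable def Ha3 (a : ℝ) : ℝ × ℝ × ℝ → ℝ :=
  fun p => (p.1 ^ 2 + p.2.1 ^ 2) * (p.1 ^ 2 + p.2.1 ^ 2 + p.2.2 ^ 2 + a)

/-- The vortex-plug vector field
`V_{a,f}(x,y,z) = (−2xz − f(H_a)·y, −2yz + f(H_a)·x, 2(2(x²+y²)+z²+a))`. -/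
noncomputable def Vaf (a : ℝ) (f : ℝ → ℝ) : ℝ × ℝ × ℝ → ℝ × ℝ × ℝ :=
  fun p =>
    (-2 * p.1 * p.2.2 - f (Ha3 a p) * p.2.1,
      -2 * p.2.1 * p.2.2 + f (Ha3 a p) * p.1,
      2 * (2 * (p.1 ^ 2 + p.2.1 ^ 2) + p.2.2 ^ 2 + a))

/-- The coordinate linear equivalence `ℝ × ℝ × ℝ ≃ₗ[ℝ] (Fin 3 → ℝ)`. -/
noncomputable def eqv3 : (ℝ × ℝ × ℝ) ≃ₗ[ℝ] (Fin 3 → ℝ) where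
  toFun p := ![p.1, p.2.1, p.2.2]
  invFun v := (v 0, v 1, v 2)
  map_add' p q := by funext i; fin_cases i <;> simp
  map_smul' c p := by funext i; fin_cases i <;> simp
  left_inv p := by simp
  right_inv v := by funext i; fin_cases i <;> simp

/-- The standard basis of `ℝ × ℝ × ℝ`. -/
noncomputable def bR3 : Module.Basis (Fin 3) ℝ (ℝ × ℝ × ℝ) := Module.Basis.ofEquivFun eqv3

/-- Trace of an endomorphism of `ℝ × ℝ × ℝ` as a sum of diagonal entries. -/
theorem trace3 (L : (ℝ × ℝ × ℝ) →ₗ[ℝ] (ℝ × ℝ × ℝ)) :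
    LinearMap.trace ℝ (ℝ × ℝ × ℝ) L
      = (L (1,0,0)).1 + (L (0,1,0)).2.1 + (L (0,0,1)).2.2 := by
  rw [LinearMap.trace_eq_matrix_trace ℝ bR3, Matrix.trace]
  simp [LinearMap.toMatrix_apply, Fin.sum_univ_three, bR3, eqv3,
    Function.update, Matrix.diag]

/-- For any `a` and differentiable `f`, the vortex-plug field `V_{a,f}` is divergence-free:
it is differentiable everywhere and the trace of its Fréchet derivative vanishes. -/
theorem stmt7 (a : ℝ) (f : ℝ → ℝ) (hf : Differentiable ℝ f) (p : ℝ × ℝ × ℝ) :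
    DifferentiableAt ℝ (Vaf a f) p ∧
    LinearMap.trace ℝ (ℝ × ℝ × ℝ) (fderiv ℝ (Vaf a f) p).toLinearMap = 0 := by
  have h1 : HasFDerivAt (fun q : ℝ × ℝ × ℝ => q.1)
      (ContinuousLinearMap.fst ℝ ℝ (ℝ × ℝ)) p := hasFDerivAt_fst
  have h2 : HasFDerivAt (fun q : ℝ × ℝ × ℝ => q.2.1)
      ((ContinuousLinearMap.fst ℝ ℝ ℝ).comp (ContinuousLinearMap.snd ℝ ℝ (ℝ × ℝ))) p :=
    hasFDerivAt_fst.comp p hasFDerivAt_snd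
  have h3 : HasFDerivAt (fun q : ℝ × ℝ × ℝ => q.2.2)
      ((ContinuousLinearMap.snd ℝ ℝ ℝ).comp (ContinuousLinearMap.snd ℝ ℝ (ℝ × ℝ))) p :=
    hasFDerivAt_snd.comp p hasFDerivAt_snd
  have hr := (h1.mul h1).add (h2.mul h2)
  have hS := (hr.add (h3.mul h3)).add_const a
  have hH := hr.mul hS
  have hfH := (hf ((p.1 * p.1 + p.2.1 * p.2.1) *
      (p.1 * p.1 + p.2.1 * p.2.1 + p.2.2 * p.2.2 + a))).hasDerivAt.comp_hasFDerivAt p hH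
  have hV1 := ((h1.const_mul (-2)).mul h3).sub (hfH.mul h2)
  have hV2 := ((h2.const_mul (-2)).mul h3).add (hfH.mul h1)
  have hV3 := (((hr.const_mul 2).add (h3.mul h3)).add_const a).const_mul 2
  have hVbig := HasFDerivAt.prodMk hV1 (HasFDerivAt.prodMk hV2 hV3)
  have hfun : Vaf a f = fun q : ℝ × ℝ × ℝ =>
      (-2 * q.1 * q.2.2 -
        f ((q.1 * q.1 + q.2.1 * q.2.1) * (q.1 * q.1 + q.2.1 * q.2.1 + q.2.2 * q.2.2 + a)) * q.2.1,
       -2 * q.2.1 * q.2.2 +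
        f ((q.1 * q.1 + q.2.1 * q.2.1) * (q.1 * q.1 + q.2.1 * q.2.1 + q.2.2 * q.2.2 + a)) * q.1,
       2 * (2 * (q.1 * q.1 + q.2.1 * q.2.1) + q.2.2 * q.2.2 + a)) := by
    funext q
    simp only [Vaf, Ha3, Prod.mk.injEq, pow_two]
  have hV : HasFDerivAt (Vaf a f) _ p := hfun ▸ hVbig
  refine ⟨hV.differentiableAt, ?_⟩
  rw [hV.fderiv, trace3]
  simp only [ContinuousLinearMap.coe_coe, ContinuousLinearMap.prod_apply,
    ContinuousLinearMap.sub_apply, ContinuousLinearMap.add_apply, ContinuousLinearMap.smul_apply,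
    ContinuousLinearMap.coe_comp', Function.comp_apply, smul_eq_mul,
    ContinuousLinearMap.coe_fst', ContinuousLinearMap.coe_snd']
  ring
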